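/- Bottleneck blocking (separator) corollary: let (α_t)_{t∈ℕ} be a play, let D' ⊆ R be a set of agents that never move (α_t(d) = α_0(d) for all d ∈ D' and all t), and let B = { α_0(d) : d ∈ D' }. If a vertex v is not reachable from α_0(a) in the subgraph of G induced on V \ B (i.e., every path in G from α_0(a) to v passes through B), where a ∉ D', then α_t(a) ≠ v for every time step t; the agent a never reaches v. -/

import Mathlib

/-- Configuration `β` is obtained from configuration `α` by a legal joint move in the
APP movement model on graph `G`:
(i) each agent stays or moves to an adjacent vertex;
(ii) an agent may move into a vertex currently occupied by another agent only if that
agent vacates it at the same step;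
(iii) no pair of agents swaps across an edge;
(iv) no two moving agents enter the same vertex. -/
def LegalMove {V R : Type*} (G : SimpleGraph V) (α β : R → V) : Prop :=
  (∀ r, β r = α r ∨ G.Adj (α r) (β r)) ∧
  (∀ r s, r ≠ s → β r ≠ α r → β r = α s → β s ≠ α s) ∧
  (∀ r s, r ≠ s → ¬(β r = α s ∧ β s = α r)) ∧
  (∀ r s, r ≠ s → β r ≠ α r → β s ≠ α s → β r ≠ β s)

/-- A play in the APP movement model: the initial configuration is injective and each
successive configuration is obtained by a legal joint move. -/
def IsPlay {V R : Type*} (G : SimpleGraph V) (α : ℕ → R → V) : Prop :=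
  Function.Injective (α 0) ∧ ∀ t, LegalMove G (α t) (α (t + 1))

/-- The subgraph of `G` induced on `V \ B`: edges of `G` with both endpoints outside `B`. -/
def avoidGraph {V : Type*} (G : SimpleGraph V) (B : Set V) : SimpleGraph V where
  Adj u v := G.Adj u v ∧ u ∉ B ∧ v ∉ B
  symm := ⟨fun u v ⟨huv, hu, hv⟩ => ⟨huv.symm, hv, hu⟩⟩
  loopless := ⟨fun v ⟨hvv, _, _⟩ => G.loopless.irrefl v hvv⟩

/-- Bottleneck blocking (separator) corollary: if the agents in `D'` never move, `B` is the
set of vertices they occupy, and `v` is not reachable from `α 0 a` in the subgraph of `G`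
induced on `V \ B`, then the agent `a ∉ D'` never reaches `v`. -/
theorem bottleneck_blocking {V R : Type*} [Fintype R]
    (G : SimpleGraph V) (α : ℕ → R → V) (h : IsPlay G α)
    (D' : Set R) (hstat : ∀ d ∈ D', ∀ t, α t d = α 0 d)
    (B : Set V) (hB : B = α 0 '' D')
    (a : R) (ha : a ∉ D') (v : V)
    (hsep : ¬ (avoidGraph G B).Reachable (α 0 a) v) (t : ℕ) :
    α t a ≠ v := by
  obtain ⟨hinj, hmove⟩ := h
  -- invariant: α t a ∉ B and reachable from α 0 a in avoidGraph
  have key : ∀ t, α t a ∉ B ∧ (avoidGraph G B).Reachable (α 0 a) (α t a) := by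
    intro t
    induction t with
    | zero =>
      refine ⟨?_, SimpleGraph.Reachable.refl _⟩
      rintro hmem
      rw [hB] at hmem
      obtain ⟨d, hd, hda⟩ := hmem
      exact ha (hinj hda ▸ hd)
    | succ t ih =>
      obtain ⟨hnB, hreach⟩ := ih
      obtain ⟨hadj, hvac, -, -⟩ := hmove t
      have hnB' : α (t + 1) a ∉ B := by
        intro hmem
        rw [hB] at hmem
        obtain ⟨d, hd, hda⟩ := hmem
        have hne : α (t + 1) a ≠ α t a := by
          intro heq
          exact hnB (by rw [← heq, hB]; exact ⟨d, hd, hda⟩)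
        have had : a ≠ d := fun h => ha (h ▸ hd)
        have h2 : α (t + 1) a = α t d := by rw [hstat d hd t, hda]
        have := hvac a d had hne h2
        exact this (by rw [hstat d hd (t + 1), hstat d hd t])
      rcases hadj a with heq | hadj'
      · exact ⟨heq ▸ hnB, heq ▸ hreach⟩
      · exact ⟨hnB', hreach.trans (SimpleGraph.Adj.reachable (show G.Adj (α t a) (α (t + 1) a) ∧ α t a ∉ B ∧ α (t + 1) a ∉ B from ⟨hadj', hnB, hnB'⟩))⟩
  intro hv
  exact hsep (hv ▸ (key t).2)
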